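/- Let T be a transducer that does not satisfy the weak twinning property. Then there exists a run q₁ →^{u|u₁} q₁ →^{v|v₁} q₁ →^{u|u₂} q₂ →^{v|v₂} q₂ in T such that either |v₁| ≠ |v₂|, or v₁ and v₂ are both nonempty and there is a mismatch between u₁ and u₂ (a position where both are defined and differ). -/

import Mathlib

variable {S G : Type}

def wordFG (w : List G) : FreeGroup G := (w.map FreeGroup.of).prod

def delta (v w : List G) : FreeGroup G := (wordFG v)⁻¹ * wordFG w

def dlen [DecidableEq G] (v w : List G) : ℕ := (delta v w).norm

def wpow (v : List G) (n : ℕ) : List G := (List.replicate n v).flatten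

structure NFT (S G Q : Type) where
  E : Set (Q × S × List G × Q)
  I : Set Q
  F : Set Q
  out : Q → List G

namespace NFT

variable {Q Q₁ Q₂ : Type}

inductive Run (T : NFT S G Q) : Q → List S → List G → Q → Prop
  | nil (q : Q) : Run T q [] [] q
  | cons {q q' q'' : Q} {a : S} {w : List G} {u : List S} {v : List G} :
      (q, a, w, q') ∈ T.E → Run T q' u v q'' → Run T q (a :: u) (w ++ v) q''

def Rel (T : NFT S G Q) (u : List S) (v : List G) : Prop :=
  ∃ i t w, i ∈ T.I ∧ t ∈ T.F ∧ T.Run i u w t ∧ v = w ++ T.out t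

def Trim (T : NFT S G Q) : Prop :=
  ∀ q : Q, ∃ i t u₁ w₁ u₂ w₂, i ∈ T.I ∧ t ∈ T.F ∧ T.Run i u₁ w₁ q ∧ T.Run q u₂ w₂ t

def WTP (T : NFT S G Q) : Prop :=
  ∀ q₁ q₂ (u v : List S) (u₁ u₂ v₁ v₂ : List G), T.Run q₁ u u₁ q₁ → T.Run q₁ v v₁ q₁ →
    T.Run q₁ u u₂ q₂ → T.Run q₂ v v₂ q₂ →
    delta u₁ u₂ = delta (u₁ ++ v₁) (u₂ ++ v₂)

def Seq (T : NFT S G Q) : Prop :=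
  (∃ q₀, T.I = {q₀}) ∧
  ∀ q a w₁ q₁ w₂ q₂, (q, a, w₁, q₁) ∈ T.E → (q, a, w₂, q₂) ∈ T.E → w₁ = w₂ ∧ q₁ = q₂

end NFT


-- auxiliary lemmas

theorem wordFG_append' (x y : List G) : wordFG (x ++ y) = wordFG x * wordFG y := by
  simp [wordFG]

theorem wpow_succ (v : List G) (n : ℕ) : wpow v (n + 1) = v ++ wpow v n := by
  simp [wpow, List.replicate_succ]

theorem wpow_succ' (v : List G) (n : ℕ) : wpow v (n + 1) = wpow v n ++ v := by
  simp [wpow, List.replicate_succ']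

theorem length_wpow (v : List G) (n : ℕ) : (wpow v n).length = n * v.length := by
  induction n with
  | zero => simp [wpow]
  | succ n ih => rw [wpow_succ, List.length_append, ih]; ring

theorem take_eq_of_agree {a b : List G}
    (h : ∀ i, i < a.length → i < b.length → a[i]? = b[i]?) {N : ℕ}
    (ha : N ≤ a.length) (hb : N ≤ b.length) : a.take N = b.take N := by
  apply List.ext_getElem?
  intro i
  rw [List.getElem?_take, List.getElem?_take]
  split
  · exact h i (by omega) (by omega)
  · rfl

theorem key_lemma {u₁ u₂ v₁ v₂ : List G}
    (hle : u₁.length ≤ u₂.length) (hk : v₁.length = v₂.length) (hv : v₁ ≠ [])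
    (hagree : ∀ n : ℕ, ∀ i : ℕ, i < (u₁ ++ wpow v₁ n).length → i < (u₂ ++ wpow v₂ n).length →
      (u₁ ++ wpow v₁ n)[i]? = (u₂ ++ wpow v₂ n)[i]?) :
    ∃ t : List G, u₂ = u₁ ++ t ∧ v₁ ++ t = t ++ v₂ := by
  have hkpos : 0 < v₂.length := hk ▸ List.length_pos_iff.mpr hv
  obtain ⟨n, hn⟩ : ∃ n, n = u₂.length + v₂.length := ⟨_, rfl⟩
  have hnk : n ≤ n * v₂.length := Nat.le_mul_of_pos_right n hkpos
  have hlen1 : (u₁ ++ wpow v₁ n).length = u₁.length + n * v₂.length := by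
    simp [length_wpow, hk]
  have hlen2 : (u₂ ++ wpow v₂ n).length = u₂.length + n * v₂.length := by
    simp [length_wpow]
  have htake : ∀ N ≤ u₁.length + n * v₂.length,
      (u₁ ++ wpow v₁ n).take N = (u₂ ++ wpow v₂ n).take N := by
    intro N hN
    exact take_eq_of_agree (hagree n) (by omega) (by omega)
  obtain ⟨t, htdef⟩ : ∃ t, t = (wpow v₁ n).take (u₂.length - u₁.length) := ⟨_, rfl⟩
  have htlen : t.length = u₂.length - u₁.length := by
    rw [htdef]
    simp only [List.length_take, length_wpow, hk]
    omega
  have ha : u₂ = u₁ ++ t := by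
    have h1 : (u₂ ++ wpow v₂ n).take u₂.length = u₂ := List.take_left' rfl
    have h2 : (u₁ ++ wpow v₁ n).take u₂.length = u₁ ++ t := by
      rw [List.take_append, List.take_of_length_le hle, ← htdef]
    rw [← h1, ← htake u₂.length (by omega), h2]
  refine ⟨t, ha, ?_⟩
  have hvt : v₁ ++ t = (wpow v₁ n).take (v₂.length + (u₂.length - u₁.length)) := by
    have e1 : (wpow v₁ (n+1)).take (v₂.length + (u₂.length - u₁.length)) = v₁ ++ t := by
      rw [wpow_succ, List.take_append,
        List.take_of_length_le (by omega : v₁.length ≤ v₂.length + (u₂.length - u₁.length)),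
        htdef]
      congr 2
      omega
    have e2 : (wpow v₁ (n+1)).take (v₂.length + (u₂.length - u₁.length))
        = (wpow v₁ n).take (v₂.length + (u₂.length - u₁.length)) := by
      rw [wpow_succ', List.take_append,
        show v₂.length + (u₂.length - u₁.length) - (wpow v₁ n).length = 0 from by
          simp only [length_wpow, hk]; omega]
      simp
    rw [← e1, e2]
  have hv2' : v₂ = (wpow v₂ n).take v₂.length := by
    obtain ⟨n', rfl⟩ : ∃ n', n = n' + 1 := ⟨n - 1, by omega⟩
    rw [wpow_succ]
    exact (List.take_left' rfl).symm
  have htv : t ++ v₂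
      = (t ++ wpow v₂ n).take (v₂.length + (u₂.length - u₁.length)) := by
    rw [List.take_append,
      List.take_of_length_le (by rw [htlen]; omega : t.length ≤ v₂.length + (u₂.length - u₁.length))]
    congr 1
    rw [htlen,
      show v₂.length + (u₂.length - u₁.length) - (u₂.length - u₁.length) = v₂.length from by omega]
    exact hv2'
  have hd1 : wpow v₁ n = (u₁ ++ wpow v₁ n).drop u₁.length := (List.drop_left (l₁ := u₁)).symm
  have hd2 : (u₂ ++ wpow v₂ n).drop u₁.length = t ++ wpow v₂ n := by
    rw [ha, List.append_assoc]
    exact List.drop_left (l₁ := u₁)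
  have keydt : ∀ W : List G, (W.drop u₁.length).take (v₂.length + (u₂.length - u₁.length))
      = (W.take (u₁.length + (v₂.length + (u₂.length - u₁.length)))).drop u₁.length := by
    intro W
    rw [List.drop_take]
    congr 1
    omega
  calc v₁ ++ t = (wpow v₁ n).take (v₂.length + (u₂.length - u₁.length)) := hvt
    _ = ((u₁ ++ wpow v₁ n).drop u₁.length).take (v₂.length + (u₂.length - u₁.length)) := by
        rw [← hd1]
    _ = ((u₁ ++ wpow v₁ n).take (u₁.length + (v₂.length + (u₂.length - u₁.length)))).drop u₁.length :=
        keydt _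
    _ = ((u₂ ++ wpow v₂ n).take (u₁.length + (v₂.length + (u₂.length - u₁.length)))).drop u₁.length := by
        rw [htake _ (by omega)]
    _ = ((u₂ ++ wpow v₂ n).drop u₁.length).take (v₂.length + (u₂.length - u₁.length)) :=
        (keydt _).symm
    _ = (t ++ wpow v₂ n).take (v₂.length + (u₂.length - u₁.length)) := by rw [hd2]
    _ = t ++ v₂ := htv.symm

theorem delta_eq_of_conj (u t v₁ v₂ : List G) (h : v₁ ++ t = t ++ v₂) :
    delta u (u ++ t) = delta (u ++ v₁) (u ++ t ++ v₂) := by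
  have h' : wordFG v₁ * wordFG t = wordFG t * wordFG v₂ := by
    simpa [wordFG_append'] using congrArg wordFG h
  have hv : wordFG v₂ = (wordFG t)⁻¹ * wordFG v₁ * wordFG t := by
    rw [mul_assoc, h']
    group
  simp only [delta, wordFG_append', hv]
  group

theorem delta_eq_of_conj' (u t v₁ v₂ : List G) (h : v₂ ++ t = t ++ v₁) :
    delta (u ++ t) u = delta (u ++ t ++ v₁) (u ++ v₂) := by
  have h' : wordFG v₂ * wordFG t = wordFG t * wordFG v₁ := by
    simpa [wordFG_append'] using congrArg wordFG h
  have hv : wordFG v₂ = wordFG t * wordFG v₁ * (wordFG t)⁻¹ := by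
    rw [← h']
    group
  simp only [delta, wordFG_append', hv]
  group

theorem NFT.Run.append {Q : Type} {T : NFT S G Q} {q q' q'' : Q} {u u' : List S} {w w' : List G}
    (h1 : T.Run q u w q') (h2 : T.Run q' u' w' q'') : T.Run q (u ++ u') (w ++ w') q'' := by
  induction h1 with
  | nil => simpa using h2
  | cons he _ ih =>
      rw [List.cons_append, List.append_assoc]
      exact .cons he (ih h2)

theorem NFT.Run.pow {Q : Type} {T : NFT S G Q} {q : Q} {v : List S} {w : List G}
    (h : T.Run q v w q) (n : ℕ) : T.Run q (wpow v n) (wpow w n) q := by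
  induction n with
  | zero => simpa [wpow] using NFT.Run.nil (T := T) q
  | succ n ih => rw [wpow_succ, wpow_succ]; exact h.append ih

/-- If `T` does not satisfy the weak twinning property, then there is a run
`q₁ →u|u₁ q₁ →v|v₁ q₁ →u|u₂ q₂ →v|v₂ q₂` with either `|v₁| ≠ |v₂|`, or `v₁,v₂` nonempty and
a mismatch between `u₁` and `u₂`. -/
theorem exists_witness_of_not_wtp {Q : Type} (T : NFT S G Q) (h : ¬ T.WTP) :
    ∃ (q₁ q₂ : Q) (u v : List S) (u₁ u₂ v₁ v₂ : List G),
      T.Run q₁ u u₁ q₁ ∧ T.Run q₁ v v₁ q₁ ∧ T.Run q₁ u u₂ q₂ ∧ T.Run q₂ v v₂ q₂ ∧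
      (v₁.length ≠ v₂.length ∨
        (v₁ ≠ [] ∧ v₂ ≠ [] ∧ (∃ i, i < u₁.length ∧ i < u₂.length ∧ u₁[i]? ≠ u₂[i]?))) := by
  by_contra hcon
  apply h
  intro q₁ q₂ u v u₁ u₂ v₁ v₂ hr1 hr2 hr3 hr4
  have H : ∀ n : ℕ, v₁.length = v₂.length ∧
      (v₁ ≠ [] → v₂ ≠ [] → ∀ i, i < (u₁ ++ wpow v₁ n).length → i < (u₂ ++ wpow v₂ n).length →
        (u₁ ++ wpow v₁ n)[i]? = (u₂ ++ wpow v₂ n)[i]?) := by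
    intro n
    have hn : ¬ (v₁.length ≠ v₂.length ∨
        (v₁ ≠ [] ∧ v₂ ≠ [] ∧ (∃ i, i < (u₁ ++ wpow v₁ n).length ∧ i < (u₂ ++ wpow v₂ n).length ∧
          (u₁ ++ wpow v₁ n)[i]? ≠ (u₂ ++ wpow v₂ n)[i]?))) := by
      intro hd
      exact hcon ⟨q₁, q₂, u ++ wpow v n, v, u₁ ++ wpow v₁ n, u₂ ++ wpow v₂ n, v₁, v₂,
        hr1.append (hr2.pow n), hr2, hr3.append (hr4.pow n), hr4, hd⟩
    push_neg at hn
    exact hn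
  obtain ⟨hk, -⟩ := H 0
  by_cases hv : v₁ = []
  · have hv2 : v₂ = [] := by
      rw [hv] at hk; exact List.length_eq_zero_iff.mp hk.symm
    subst hv; subst hv2; simp
  · have hv2 : v₂ ≠ [] := by
      intro h2; rw [h2] at hk; exact hv (List.length_eq_zero_iff.mp hk)
    have hagree : ∀ n : ℕ, ∀ i : ℕ, i < (u₁ ++ wpow v₁ n).length → i < (u₂ ++ wpow v₂ n).length →
        (u₁ ++ wpow v₁ n)[i]? = (u₂ ++ wpow v₂ n)[i]? := fun n => (H n).2 hv hv2
    rcases le_total u₁.length u₂.length with hle | hle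
    · obtain ⟨t, ht, hconj⟩ := key_lemma hle hk hv hagree
      rw [ht]
      exact delta_eq_of_conj u₁ t v₁ v₂ hconj
    · have hagree' : ∀ n : ℕ, ∀ i : ℕ, i < (u₂ ++ wpow v₂ n).length →
          i < (u₁ ++ wpow v₁ n).length →
          (u₂ ++ wpow v₂ n)[i]? = (u₁ ++ wpow v₁ n)[i]? :=
        fun n i h1 h2 => (hagree n i h2 h1).symm
      obtain ⟨t, ht, hconj⟩ := key_lemma hle hk.symm hv2 hagree'
      rw [ht]
      exact delta_eq_of_conj' u₂ t v₁ v₂ hconj
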